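/- arXiv:1304.0043 — 3 statements merged into one kernel-verified Lean document; each statement's English description precedes it below -/
import Mathlib

section
/- For any prime power q and positive integer n, defining M_q^sym = limsup_{k→∞} μ_q^sym(k)/k, one has M_q^sym ≤ M_{q^n}^sym · μ_q^sym(n). -/
set_option autoImplicit false
set_option maxHeartbeats 1000000
set_option synthInstance.maxHeartbeats 1000000

open Polynomial Finset


/-- A symmetric decomposition with `r` summands of the multiplication tensor of a degree-`n`
extension `L` (with `q ^ n` elements) of a finite field `K` with `q` elements. -/
structure SymMulDecomp (q n r : ℕ) where
  L : Type
  [fieldL : Field L]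
  K : Subfield L
  cardL : Nat.card L = q ^ n
  cardK : Nat.card K = q
  x : Fin r → (L →ₗ[K] K)
  c : Fin r → L
  mul_eq : ∀ a b : L, a * b = ∑ i, ((x i a : L) * (x i b : L)) * c i

/-- The symmetric bilinear complexity `μ_q^sym(n)` of multiplication in `F_{q^n}` over `F_q`. -/
noncomputable def muSym (q n : ℕ) : ℕ := sInf { r | Nonempty (SymMulDecomp q n r) }

/-- `M_q^sym = limsup_{k→∞} μ_q^sym(k)/k`. -/
noncomputable def MSym (q : ℕ) : ℝ :=
  Filter.limsup (fun k : ℕ => (muSym q k : ℝ) / k) Filter.atTop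

section Frob

variable (L : Type) [Field L] (p : ℕ) [Fact p.Prime] [CharP L p]

/-- The subfield of fixed points of `x ↦ x ^ p ^ s`. -/
def frobSubfield (s : ℕ) : Subfield L where
  carrier := {x | x ^ p ^ s = x}
  mul_mem' := by
    intro a b ha hb
    simp only [Set.mem_setOf_eq, mul_pow] at *
    rw [ha, hb]
  one_mem' := by simp
  add_mem' := by
    intro a b ha hb
    simp only [Set.mem_setOf_eq] at *
    rw [add_pow_char_pow, ha, hb]
  zero_mem' := by
    simp only [Set.mem_setOf_eq]
    exact zero_pow (pow_ne_zero _ (Fact.out (p := p.Prime)).ne_zero)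
  neg_mem' := by
    intro a ha
    simp only [Set.mem_setOf_eq] at *
    rw [neg_pow, ha, neg_one_pow_char_pow]
    ring
  inv_mem' := by
    intro a ha
    simp only [Set.mem_setOf_eq] at *
    rw [inv_pow, ha]

lemma mem_frobSubfield {s : ℕ} {x : L} : x ∈ frobSubfield L p s ↔ x ^ p ^ s = x := Iff.rfl

lemma card_frobSubfield [Fintype L] (s : ℕ) (hs : s ≠ 0)
    (hdvd : p ^ s - 1 ∣ Fintype.card L - 1) :
    Nat.card (frobSubfield L p s) = p ^ s := by
  classical
  have hp1 : 1 < p := (Fact.out (p := p.Prime)).one_lt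
  have hps : 1 < p ^ s := Nat.one_lt_pow hs hp1
  set f : L[X] := X ^ p ^ s - X with hf
  have hfne : f ≠ 0 := FiniteField.X_pow_card_sub_X_ne_zero L hps
  have hsep : f.Separable := galois_poly_separable p (p ^ s) (dvd_pow_self p hs)
  -- f divides X ^ card L - X
  have hcard1 : 1 < Fintype.card L := Fintype.one_lt_card
  have hfactor : ∀ m : ℕ, 1 < m → (X : L[X]) ^ m - X = (X ^ (m - 1) - 1) * X := by
    intro m hm
    have : m - 1 + 1 = m := by omega
    rw [sub_mul, one_mul, ← pow_succ, this]
  have hdvd2 : (X : L[X]) ^ (p ^ s - 1) - 1 ∣ X ^ (Fintype.card L - 1) - 1 := by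
    obtain ⟨c, hc⟩ := hdvd
    rw [hc, pow_mul]
    simpa using sub_dvd_pow_sub_pow ((X : L[X]) ^ (p ^ s - 1)) 1 c
  have hfg : f ∣ X ^ Fintype.card L - X := by
    rw [hf, hfactor _ hps, hfactor _ hcard1]
    exact mul_dvd_mul_right hdvd2 X
  have hgsplits : Splits ((X : L[X]) ^ Fintype.card L - X) := by
    rw [splits_iff_card_roots, FiniteField.roots_X_pow_card_sub_X,
      FiniteField.X_pow_card_sub_X_natDegree_eq L hcard1]
    exact Finset.card_univ
  have hfsplits : Splits f :=
    Splits.of_dvd hgsplits (FiniteField.X_pow_card_sub_X_ne_zero L hcard1) hfg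
  have hroots : Multiset.card f.roots = p ^ s := by
    rw [splits_iff_card_roots.mp hfsplits, hf, FiniteField.X_pow_card_sub_X_natDegree_eq L hps]
  have hnodup : f.roots.Nodup := nodup_roots hsep
  have hset : ((frobSubfield L p s : Set L)) = (f.roots.toFinset : Set L) := by
    ext x
    simp only [SetLike.mem_coe, mem_frobSubfield, Finset.coe_sort_coe, Multiset.mem_toFinset,
      mem_roots hfne, Finset.mem_coe, IsRoot.def, hf]
    rw [← hf, mem_roots hfne, IsRoot.def, hf, eval_sub, eval_pow, eval_X, sub_eq_zero]
  have : Nat.card (frobSubfield L p s) = Nat.card (f.roots.toFinset : Set L) := by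
    exact Nat.card_congr (Equiv.setCongr hset)
  rw [this, Nat.card_coe_set_eq, Set.ncard_coe_finset, Multiset.toFinset_card_of_nodup hnodup,
    hroots]

end Frob

section PowCard

variable {L : Type} [Field L]

lemma Subfield.pow_card_eq (K : Subfield L) {q : ℕ} (hq : q ≠ 0) (hK : Nat.card K = q)
    {x : L} (hx : x ∈ K) : x ^ q = x := by
  haveI : Finite K := Nat.finite_of_card_ne_zero (by rw [hK]; exact hq)
  haveI : Fintype K := Fintype.ofFinite K
  have hcard : Fintype.card K = q := by rw [← Nat.card_eq_fintype_card, hK]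
  have h := FiniteField.pow_card (⟨x, hx⟩ : K)
  rw [hcard] at h
  have := congrArg (Subtype.val) h
  push_cast at this
  simpa using this

lemma pow_pow_self {x : L} {q : ℕ} (h : x ^ q = x) : ∀ m : ℕ, x ^ q ^ m = x := by
  intro m
  induction m with
  | zero => simp
  | succ m ih => rw [pow_succ, pow_mul, ih, h]

end PowCard

section Identity

variable {R : Type} [CommRing R] {d : ℕ}

lemma sym_decomp_identity (u v : Fin d → R) (m : Fin d → Fin d → R)
    (hm : ∀ i j, m i j = m j i) :
    ∑ p : Fin d × Fin d, u p.1 * v p.2 * m p.1 p.2 =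
      ∑ p : Fin d × Fin d,
        (if p.1 < p.2 then (u p.1 + u p.2) * (v p.1 + v p.2) * m p.1 p.2
          else if p.1 = p.2 then
            u p.1 * v p.1 * (m p.1 p.1 - ∑ l ∈ Finset.univ.filter (fun l => ¬(p.1 = l)), m p.1 l)
          else 0) := by
  classical
  have swap_sum : ∀ F : Fin d × Fin d → R,
      ∑ p : Fin d × Fin d, F p = ∑ p : Fin d × Fin d, F (p.2, p.1) := by
    intro F
    exact Fintype.sum_equiv (Equiv.prodComm _ _) _ _ (fun p => rfl)
  set A1 : Fin d × Fin d → R := fun p => if p.1 < p.2 then u p.1 * v p.1 * m p.1 p.2 else 0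
    with hA1
  set A2 : Fin d × Fin d → R := fun p => if p.1 < p.2 then u p.1 * v p.2 * m p.1 p.2 else 0
    with hA2
  set A3 : Fin d × Fin d → R := fun p => if p.1 < p.2 then u p.2 * v p.1 * m p.1 p.2 else 0
    with hA3
  set A4 : Fin d × Fin d → R := fun p => if p.1 < p.2 then u p.2 * v p.2 * m p.1 p.2 else 0
    with hA4
  set B1 : Fin d × Fin d → R := fun p => if p.1 = p.2 then u p.1 * v p.1 * m p.1 p.1 else 0
    with hB1
  set B2 : Fin d × Fin d → R := fun p =>
    if p.1 = p.2 then u p.1 * v p.1 * (∑ l ∈ Finset.univ.filter (fun l => ¬(p.1 = l)), m p.1 l)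
    else 0 with hB2
  have hsplit : ∀ p : Fin d × Fin d,
      (if p.1 < p.2 then (u p.1 + u p.2) * (v p.1 + v p.2) * m p.1 p.2
        else if p.1 = p.2 then
          u p.1 * v p.1 * (m p.1 p.1 - ∑ l ∈ Finset.univ.filter (fun l => ¬(p.1 = l)), m p.1 l)
        else 0)
      = (A1 p + A2 p + A3 p + A4 p) + (B1 p - B2 p) := by
    intro p
    simp only [hA1, hA2, hA3, hA4, hB1, hB2]
    rcases lt_trichotomy p.1 p.2 with h | h | h
    · have h2 : ¬ p.1 = p.2 := ne_of_lt h
      simp only [if_pos h, if_neg h2]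
      ring
    · have h2 : ¬ p.1 < p.2 := by simp [h]
      simp only [if_neg h2, if_pos h]
      ring
    · have h2 : ¬ p.1 < p.2 := not_lt_of_gt h
      have h3 : ¬ p.1 = p.2 := (ne_of_gt h)
      simp only [if_neg h2, if_neg h3]
      ring
  rw [Finset.sum_congr rfl (fun p _ => hsplit p)]
  simp only [Finset.sum_add_distrib, Finset.sum_sub_distrib]
  -- swap A3 and A4
  have hA3' : ∑ p : Fin d × Fin d, A3 p
      = ∑ p : Fin d × Fin d, (if p.2 < p.1 then u p.1 * v p.2 * m p.1 p.2 else 0) := by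
    rw [swap_sum A3]
    refine Finset.sum_congr rfl fun p _ => ?_
    simp only [hA3]
    by_cases h : p.2 < p.1 <;> simp [h, hm p.1 p.2]
  have hA4' : ∑ p : Fin d × Fin d, A4 p
      = ∑ p : Fin d × Fin d, (if p.2 < p.1 then u p.1 * v p.1 * m p.1 p.2 else 0) := by
    rw [swap_sum A4]
    refine Finset.sum_congr rfl fun p _ => ?_
    simp only [hA4]
    by_cases h : p.2 < p.1 <;> simp [h, hm p.1 p.2]
  -- A2 + A3 = off-diagonal of target
  have hA23 : (∑ p : Fin d × Fin d, A2 p) + (∑ p : Fin d × Fin d, A3 p)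
      = ∑ p : Fin d × Fin d, (if ¬ p.1 = p.2 then u p.1 * v p.2 * m p.1 p.2 else 0) := by
    rw [hA3', ← Finset.sum_add_distrib]
    refine Finset.sum_congr rfl fun p _ => ?_
    simp only [hA2]
    rcases lt_trichotomy p.1 p.2 with h | h | h
    · have := ne_of_lt h
      simp [h, not_lt_of_gt h, this]
    · simp [h, lt_irrefl]
    · have := ne_of_gt h
      simp [h, not_lt_of_gt h, this]
  -- A1 + A4 = B2
  have hA14 : (∑ p : Fin d × Fin d, A1 p) + (∑ p : Fin d × Fin d, A4 p)
      = ∑ p : Fin d × Fin d, (if ¬ p.1 = p.2 then u p.1 * v p.1 * m p.1 p.2 else 0) := by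
    rw [hA4', ← Finset.sum_add_distrib]
    refine Finset.sum_congr rfl fun p _ => ?_
    simp only [hA1]
    rcases lt_trichotomy p.1 p.2 with h | h | h
    · have := ne_of_lt h
      simp [h, not_lt_of_gt h, this]
    · simp [h, lt_irrefl]
    · have := ne_of_gt h
      simp [h, not_lt_of_gt h, this]
  have hB2' : ∑ p : Fin d × Fin d, B2 p
      = ∑ p : Fin d × Fin d, (if ¬ p.1 = p.2 then u p.1 * v p.1 * m p.1 p.2 else 0) := by
    rw [Fintype.sum_prod_type, Fintype.sum_prod_type]
    refine Finset.sum_congr rfl fun i _ => ?_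
    have hL : (∑ j, B2 (i, j))
        = u i * v i * ∑ l ∈ Finset.univ.filter (fun l => ¬ i = l), m i l := by
      simp only [hB2]
      rw [Finset.sum_ite_eq Finset.univ i
        (fun _ => u i * v i * ∑ l ∈ Finset.univ.filter (fun l => ¬ i = l), m i l)]
      simp only [Finset.mem_univ, if_pos]
    have hR : (∑ j, (if ¬ i = j then u i * v i * m i j else 0))
        = u i * v i * ∑ l ∈ Finset.univ.filter (fun l => ¬ i = l), m i l := by
      rw [Finset.mul_sum, Finset.sum_filter]
    rw [hL, hR]
  have hB1' : ∑ p : Fin d × Fin d, B1 p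
      = ∑ p : Fin d × Fin d, (if p.1 = p.2 then u p.1 * v p.2 * m p.1 p.2 else 0) := by
    refine Finset.sum_congr rfl fun p _ => ?_
    simp only [hB1]
    by_cases h : p.1 = p.2 <;> simp [h]
  have hsum : (∑ p : Fin d × Fin d, (if ¬ p.1 = p.2 then u p.1 * v p.2 * m p.1 p.2 else 0))
      + (∑ p : Fin d × Fin d, (if p.1 = p.2 then u p.1 * v p.2 * m p.1 p.2 else 0))
      = ∑ p : Fin d × Fin d, u p.1 * v p.2 * m p.1 p.2 := by
    rw [← Finset.sum_add_distrib]
    refine Finset.sum_congr rfl fun p _ => ?_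
    by_cases h : p.1 = p.2 <;> simp [h]
  linear_combination -hA23 - hA14 - hB1' + hB2' - hsum

end Identity

section Exists

lemma exists_decomp_aux (L : Type) [Field L] [Finite L] (K : Subfield L) (q k : ℕ)
    (hL : Nat.card L = q ^ k) (hK : Nat.card K = q) :
    ∃ r : ℕ, Nonempty (SymMulDecomp q k r) := by
  classical
  haveI : Module.Finite K L := Module.Finite.of_finite
  set d := Module.finrank K L with hd
  set b := Module.finBasis K L with hb
  set X : Fin d × Fin d → (L →ₗ[K] K) := fun p =>
    if p.1 < p.2 then b.coord p.1 + b.coord p.2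
    else if p.1 = p.2 then b.coord p.1 else 0 with hX
  set C : Fin d × Fin d → L := fun p =>
    if p.1 < p.2 then b p.1 * b p.2
    else if p.1 = p.2 then
      b p.1 * b p.1 - ∑ l ∈ Finset.univ.filter (fun l => ¬(p.1 = l)), b p.1 * b l
    else 0 with hC
  have key : ∀ a a' : L, a * a' = ∑ p : Fin d × Fin d, ((X p a : L) * (X p a' : L)) * C p := by
    intro a a'
    have expand : a * a' =
        ∑ p : Fin d × Fin d,
          ((b.repr a p.1 : L) * (b.repr a' p.2 : L)) * (b p.1 * b p.2) := by
      rw [Fintype.sum_prod_type]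
      conv_lhs => rw [← b.sum_repr a, ← b.sum_repr a']
      rw [Finset.sum_mul_sum]
      refine Finset.sum_congr rfl fun i _ => Finset.sum_congr rfl fun j _ => ?_
      show ((b.repr a i : L) * b i) * ((b.repr a' j : L) * b j) = _
      ring
    rw [expand, sym_decomp_identity (fun i => (b.repr a i : L)) (fun i => (b.repr a' i : L))
      (fun i j => b i * b j) (fun i j => mul_comm _ _)]
    refine Finset.sum_congr rfl fun p _ => ?_
    simp only [hX, hC]
    rcases lt_trichotomy p.1 p.2 with h | h | h
    · have h2 : ¬ p.1 = p.2 := ne_of_lt h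
      simp only [if_pos h]
      push_cast [LinearMap.add_apply, Module.Basis.coord_apply]
      ring
    · have h2 : ¬ p.1 < p.2 := by simp [h]
      simp only [if_neg h2, if_pos h]
      push_cast [Module.Basis.coord_apply]
      rfl
    · have h2 : ¬ p.1 < p.2 := not_lt_of_gt h
      have h3 : ¬ p.1 = p.2 := ne_of_gt h
      simp only [if_neg h2, if_neg h3]
      push_cast [LinearMap.zero_apply]
      ring
  refine ⟨d * d, ⟨{
    L := L
    K := K
    cardL := hL
    cardK := hK
    x := fun i => X (finProdFinEquiv.symm i)
    c := fun i => C (finProdFinEquiv.symm i)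
    mul_eq := by
      intro a a'
      rw [key a a']
      exact (Equiv.sum_comp finProdFinEquiv.symm
        (fun p => ((X p a : L) * (X p a' : L)) * C p)).symm }⟩⟩

end Exists

section CharPHelper

lemma charP_of_card (L : Type) [Field L] [Fintype L] (p m : ℕ) (hp : p.Prime) (hm : m ≠ 0)
    (hcard : Fintype.card L = p ^ m) : CharP L p := by
  obtain ⟨c, hc⟩ := CharP.exists L
  haveI := hc
  have hcp : c.Prime := CharP.char_is_prime L c
  have h0 : (Fintype.card L : L) = 0 := Nat.cast_card_eq_zero L
  have hdvd : c ∣ p ^ m := by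
    rw [← hcard]
    exact (CharP.cast_eq_zero_iff L c _).mp h0
  have : c = p := (Nat.prime_dvd_prime_iff_eq hcp hp).mp (hcp.dvd_of_dvd_pow hdvd)
  exact this ▸ hc

end CharPHelper

lemma exists_decomp (q k : ℕ) (hq : IsPrimePow q) (hk : k ≠ 0) :
    ∃ r : ℕ, Nonempty (SymMulDecomp q k r) := by
  obtain ⟨p, e, hpp, he, rfl⟩ := hq
  have hp : p.Prime := Nat.prime_iff.mpr hpp
  haveI : Fact p.Prime := ⟨hp⟩
  have hek : e * k ≠ 0 := mul_ne_zero he.ne' hk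
  set L := GaloisField p (e * k) with hLdef
  have hcard : Nat.card L = p ^ (e * k) := GaloisField.card p _ hek
  haveI : Fintype L := Fintype.ofFinite L
  have hfc : Fintype.card L = p ^ (e * k) := by rw [← Nat.card_eq_fintype_card, hcard]
  have hdvd : p ^ e - 1 ∣ Fintype.card L - 1 := by
    rw [hfc, pow_mul]
    simpa using Nat.sub_dvd_pow_sub_pow (p ^ e) 1 k
  have hK : Nat.card (frobSubfield L p e) = p ^ e := card_frobSubfield L p e he.ne' hdvd
  exact exists_decomp_aux L (frobSubfield L p e) (p ^ e) k (by rw [hcard, ← pow_mul]) hK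

section Restrict

lemma decomp_restrict {q k d r : ℕ} (hq : IsPrimePow q) (hk : k ≠ 0) (hd : d ≠ 0)
    (D : SymMulDecomp q (k * d) r) : Nonempty (SymMulDecomp q k r) := by
  classical
  obtain ⟨p, e, hpp, he, rfl⟩ := hq
  have hp : p.Prime := Nat.prime_iff.mpr hpp
  haveI : Fact p.Prime := ⟨hp⟩
  letI := D.fieldL
  have hcard : Nat.card D.L = (p ^ e) ^ (k * d) := D.cardL
  have hcard' : Nat.card D.L = p ^ (e * (k * d)) := by rw [hcard, ← pow_mul]
  have hL0 : Nat.card D.L ≠ 0 := by rw [hcard']; exact pow_ne_zero _ hp.pos.ne'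
  haveI : Finite D.L := Nat.finite_of_card_ne_zero hL0
  haveI : Fintype D.L := Fintype.ofFinite D.L
  have hfc : Fintype.card D.L = p ^ (e * (k * d)) := by rw [← Nat.card_eq_fintype_card, hcard']
  haveI : CharP D.L p :=
    charP_of_card D.L p (e * (k * d)) hp (Nat.mul_ne_zero he.ne' (Nat.mul_ne_zero hk hd)) hfc
  set L0 : Subfield D.L := frobSubfield D.L p (e * k) with hL0def
  have hcardpow : Fintype.card D.L = (p ^ (e * k)) ^ d := by
    rw [hfc, ← pow_mul]
    congr 1
    ring
  have hdvd2 : p ^ (e * k) - 1 ∣ Fintype.card D.L - 1 := by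
    rw [hcardpow]
    simpa using Nat.sub_dvd_pow_sub_pow (p ^ (e * k)) 1 d
  have hcardL0 : Nat.card L0 = (p ^ e) ^ k := by
    rw [card_frobSubfield D.L p (e * k) (mul_ne_zero he.ne' hk) hdvd2]
    exact pow_mul p e k
  have hKsub : ∀ x ∈ D.K, x ∈ L0 := by
    intro x hx
    have h1 : x ^ (p ^ e) = x := D.K.pow_card_eq (pow_ne_zero e hp.pos.ne') D.cardK hx
    have h2 := pow_pow_self h1 k
    rw [mem_frobSubfield, pow_mul]
    exact h2
  set K0 : Subfield L0 := D.K.comap L0.subtype with hK0def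
  have hcardK0 : Nat.card K0 = p ^ e := by
    have hcg : Nat.card K0 = Nat.card D.K := by
      refine Nat.card_congr
        { toFun := fun u => ⟨(u : L0), u.2⟩,
          invFun := fun v => ⟨⟨(v : D.L), hKsub _ v.2⟩, v.2⟩,
          left_inv := fun u => by ext; rfl,
          right_inv := fun v => rfl }
    rw [hcg, D.cardK]
  set V : Submodule D.K D.L :=
    { carrier := L0
      add_mem' := fun ha hb => L0.add_mem ha hb
      zero_mem' := L0.zero_mem
      smul_mem' := fun κ x hx => by
        show (κ : D.L) * x ∈ L0
        exact L0.mul_mem (hKsub _ κ.2) hx } with hVdef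
  obtain ⟨W, hW⟩ := Submodule.exists_isCompl V
  set π := V.projectionOnto W hW with hπ
  have hπ_left : ∀ (z : D.L) (hz : z ∈ L0), ((π z : V) : D.L) = z := by
    intro z hz
    have := Submodule.linearProjOfIsCompl_apply_left hW (⟨z, hz⟩ : V)
    rw [this]
  -- the new maps
  set xs : Fin r → (L0 →ₗ[K0] K0) := fun i =>
    { toFun := fun a => ⟨⟨(D.x i (a : D.L) : D.L), hKsub _ (D.x i (a : D.L)).2⟩,
        (D.x i (a : D.L)).2⟩
      map_add' := by
        intro a b
        apply Subtype.ext; apply Subtype.ext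
        show (D.x i ((a + b : L0) : D.L) : D.L) = (D.x i (a : D.L) : D.L) + (D.x i (b : D.L) : D.L)
        rw [show ((a + b : L0) : D.L) = (a : D.L) + (b : D.L) from rfl, map_add]
        rfl
      map_smul' := by
        intro s a
        apply Subtype.ext; apply Subtype.ext
        show (D.x i (((s • a : L0)) : D.L) : D.L) = (s : L0) * (D.x i (a : D.L) : D.L)
        have h := (D.x i).map_smul ⟨((s : L0) : D.L), s.2⟩ (a : D.L)
        rw [show (((s • a : L0)) : D.L) = ((⟨((s : L0) : D.L), s.2⟩ : D.K) : D.L) * (a : D.L)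
          from rfl]
        rw [show ((⟨((s : L0) : D.L), s.2⟩ : D.K) : D.L) * (a : D.L)
            = (⟨((s : L0) : D.L), s.2⟩ : D.K) • (a : D.L) from rfl, h]
        rfl } with hxs
  set cs : Fin r → L0 := fun i => ⟨((π (D.c i) : V) : D.L), (π (D.c i) : V).2⟩ with hcs
  refine Nonempty.intro
    { L := L0, K := K0, cardL := hcardL0, cardK := hcardK0, x := xs, c := cs, mul_eq := ?_ }
  intro a b
  apply Subtype.ext
  push_cast
  have happ : ((π ((a : D.L) * (b : D.L)) : V) : D.L) = (a : D.L) * (b : D.L) :=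
    hπ_left _ (L0.mul_mem a.2 b.2)
  have hsum : π ((a : D.L) * (b : D.L))
      = ∑ i, (D.x i (a : D.L) * D.x i (b : D.L)) • π (D.c i) := by
    rw [D.mul_eq (a : D.L) (b : D.L), map_sum]
    refine Finset.sum_congr rfl fun i _ => ?_
    rw [show ((D.x i (a : D.L) : D.L) * (D.x i (b : D.L) : D.L)) * D.c i
        = (D.x i (a : D.L) * D.x i (b : D.L) : D.K) • D.c i from rfl, map_smul]
  calc (a : D.L) * (b : D.L) = ((π ((a : D.L) * (b : D.L)) : V) : D.L) := happ.symm
    _ = ∑ i, (((D.x i (a : D.L) * D.x i (b : D.L) : D.K) • π (D.c i) : V) : D.L) := by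
        rw [hsum]
        push_cast
        rfl
    _ = ∑ i, ((xs i a : L0) : D.L) * ((xs i b : L0) : D.L) * ((π (D.c i) : V) : D.L) := by
        refine Finset.sum_congr rfl fun i _ => ?_
        rfl

end Restrict

section Comp

lemma card_subfield_map {A B : Type} [Field A] [Field B] (f : A →+* B) (S : Subfield A) :
    Nat.card (S.map f) = Nat.card S := by
  have h1 : Nat.card (S.map f) = Nat.card ((f '' (S : Set A)) : Set B) :=
    Nat.card_congr (Equiv.setCongr (Subfield.coe_map S f))
  rw [h1]
  exact (Nat.card_congr (Equiv.Set.image f (S : Set A) f.injective)).symm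

lemma decomp_comp {q n m r1 r2 : ℕ} (hq : 2 ≤ q) (hn : n ≠ 0) (hm : m ≠ 0)
    (D1 : SymMulDecomp q n r1) (D2 : SymMulDecomp (q ^ n) m r2) :
    Nonempty (SymMulDecomp q (n * m) (r1 * r2)) := by
  classical
  letI := D1.fieldL
  letI := D2.fieldL
  have hq0 : q ≠ 0 := by omega
  have hL1 : Nat.card D1.L ≠ 0 := by rw [D1.cardL]; exact pow_ne_zero _ hq0
  have hL2 : Nat.card D2.L ≠ 0 := by rw [D2.cardL]; exact pow_ne_zero _ (pow_ne_zero _ hq0)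
  have hK1 : Nat.card D2.K ≠ 0 := by rw [D2.cardK]; exact pow_ne_zero _ hq0
  haveI : Finite D1.L := Nat.finite_of_card_ne_zero hL1
  haveI : Finite D2.L := Nat.finite_of_card_ne_zero hL2
  haveI : Finite D2.K := Nat.finite_of_card_ne_zero hK1
  haveI : Fintype D1.L := Fintype.ofFinite _
  haveI : Fintype D2.K := Fintype.ofFinite _
  have hfc : Fintype.card D1.L = Fintype.card D2.K := by
    rw [← Nat.card_eq_fintype_card, ← Nat.card_eq_fintype_card, D1.cardL, D2.cardK]
  set φ : D1.L ≃+* D2.K := FiniteField.ringEquivOfCardEq hfc with hφ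
  set K0' : Subfield D2.K := D1.K.map (φ : D1.L →+* D2.K) with hK0'
  set Kf : Subfield D2.L := K0'.map D2.K.subtype with hKf
  have hKfcard : Nat.card Kf = q := by
    rw [hKf, card_subfield_map, hK0', card_subfield_map, D1.cardK]
  have hKfK1 : ∀ z : D2.L, z ∈ Kf → z ∈ D2.K := by
    intro z hz
    obtain ⟨w, _, rfl⟩ := Subfield.mem_map.mp hz
    exact w.2
  -- membership of the composite values
  have hmem : ∀ (u : D1.K), ((φ ((u : D1.L)) : D2.K) : D2.L) ∈ Kf := by
    intro u
    refine Subfield.mem_map.mpr ⟨φ (u : D1.L), ?_, rfl⟩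
    exact Subfield.mem_map.mpr ⟨(u : D1.L), u.2, rfl⟩
  set Xval : Fin r1 × Fin r2 → D2.L → Kf := fun p a =>
    ⟨((φ ((D1.x p.1 (φ.symm (D2.x p.2 a)) : D1.K) : D1.L) : D2.K) : D2.L),
      hmem (D1.x p.1 (φ.symm (D2.x p.2 a)))⟩ with hXval
  have hXadd : ∀ p a b, Xval p (a + b) = Xval p a + Xval p b := by
    intro p a b
    apply Subtype.ext
    show ((φ ((D1.x p.1 (φ.symm (D2.x p.2 (a + b))) : D1.K) : D1.L) : D2.K) : D2.L) = _
    rw [map_add (D2.x p.2), map_add φ.symm, map_add (D1.x p.1)]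
    push_cast [map_add φ]
    rfl
  have hXsmul : ∀ p (s : Kf) (a : D2.L), Xval p ((s : D2.L) * a) = s * Xval p a := by
    intro p s a
    obtain ⟨w', hw', hws⟩ := Subfield.mem_map.mp s.2
    obtain ⟨u, hu, huw⟩ := Subfield.mem_map.mp hw'
    -- σ : element of D2.K equal to s
    have hσ : (s : D2.L) = (w' : D2.L) := hws.symm
    apply Subtype.ext
    show ((φ ((D1.x p.1 (φ.symm (D2.x p.2 ((s : D2.L) * a))) : D1.K) : D1.L) : D2.K) : D2.L)
      = (s : D2.L) * ((φ ((D1.x p.1 (φ.symm (D2.x p.2 a)) : D1.K) : D1.L) : D2.K) : D2.L)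
    have h1 : (s : D2.L) * a = (w' : D2.K) • a := by rw [hσ]; rfl
    have h2 : D2.x p.2 ((w' : D2.K) • a) = w' * D2.x p.2 a := by
      rw [map_smul]; rfl
    rw [h1, h2, map_mul φ.symm]
    have h3 : φ.symm w' = u := by rw [← huw]; exact φ.symm_apply_apply u
    rw [h3]
    have h4 : D1.x p.1 (u * φ.symm (D2.x p.2 a))
        = (⟨u, hu⟩ : D1.K) * D1.x p.1 (φ.symm (D2.x p.2 a)) := by
      exact map_smul (D1.x p.1) (⟨u, hu⟩ : D1.K) (φ.symm (D2.x p.2 a))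
    rw [h4]
    push_cast
    rw [map_mul φ]
    push_cast
    rw [show ((φ u : D2.K) : D2.L) = (w' : D2.L) by rw [← huw]; rfl, ← hσ]
  set X : Fin r1 × Fin r2 → (D2.L →ₗ[Kf] Kf) := fun p =>
    { toFun := Xval p
      map_add' := hXadd p
      map_smul' := fun s a => hXsmul p s a } with hX
  set C : Fin r1 × Fin r2 → D2.L := fun p => ((φ (D1.c p.1) : D2.K) : D2.L) * D2.c p.2 with hC
  have key : ∀ a b : D2.L,
      a * b = ∑ p : Fin r1 × Fin r2, ((Xval p a : D2.L) * (Xval p b : D2.L)) * C p := by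
    intro a b
    rw [D2.mul_eq a b, Fintype.sum_prod_type, Finset.sum_comm]
    refine Finset.sum_congr rfl fun j _ => ?_
    set w := D2.x j a with hw
    set w' := D2.x j b with hw'
    have h1 := D1.mul_eq (φ.symm w) (φ.symm w')
    have h2 : w * w' = ∑ i, (φ ((D1.x i (φ.symm w) : D1.K) : D1.L))
        * (φ ((D1.x i (φ.symm w') : D1.K) : D1.L)) * φ (D1.c i) := by
      have := congrArg φ h1
      rw [map_mul φ] at this
      rw [φ.apply_symm_apply, φ.apply_symm_apply] at this
      rw [this, map_sum φ]
      refine Finset.sum_congr rfl fun i _ => ?_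
      rw [map_mul φ, map_mul φ]
    have h3 : ((w : D2.L) * (w' : D2.L)) = ((w * w' : D2.K) : D2.L) := by push_cast; rfl
    calc ((w : D2.L)) * (w' : D2.L) * D2.c j = ((w * w' : D2.K) : D2.L) * D2.c j := by
          rw [h3]
      _ = (∑ i, ((φ ((D1.x i (φ.symm w) : D1.K) : D1.L) : D2.K) : D2.L)
            * ((φ ((D1.x i (φ.symm w') : D1.K) : D1.L) : D2.K) : D2.L)
            * ((φ (D1.c i) : D2.K) : D2.L)) * D2.c j := by
          rw [h2]; push_cast; rfl
      _ = ∑ i, ((Xval (i, j) a : D2.L) * (Xval (i, j) b : D2.L)) * C (i, j) := by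
          rw [Finset.sum_mul]
          refine Finset.sum_congr rfl fun i _ => ?_
          show _ = ((Xval (i, j) a : D2.L) * (Xval (i, j) b : D2.L))
            * (((φ (D1.c i) : D2.K) : D2.L) * D2.c j)
          rw [hXval]
          ring
  refine Nonempty.intro
    { L := D2.L, K := Kf, cardL := by rw [D2.cardL, ← pow_mul], cardK := hKfcard,
      x := fun t => X (finProdFinEquiv.symm t),
      c := fun t => C (finProdFinEquiv.symm t),
      mul_eq := ?_ }
  intro a b
  rw [key a b]
  exact (Equiv.sum_comp finProdFinEquiv.symm
    (fun p => ((Xval p a : D2.L) * (Xval p b : D2.L)) * C p)).symm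

end Comp

section Extend

lemma decomp_extend {q n k r : ℕ} (hq : IsPrimePow q) (hn : n ≠ 0) (hk : k ≠ 0)
    (D : SymMulDecomp q (n * k) r) : Nonempty (SymMulDecomp (q ^ n) k r) := by
  classical
  obtain ⟨p, e, hpp, he, rfl⟩ := hq
  have hp : p.Prime := Nat.prime_iff.mpr hpp
  haveI : Fact p.Prime := ⟨hp⟩
  letI := D.fieldL
  have hcard' : Nat.card D.L = p ^ (e * (n * k)) := by rw [D.cardL, ← pow_mul]
  have hL0 : Nat.card D.L ≠ 0 := by rw [hcard']; exact pow_ne_zero _ hp.pos.ne'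
  haveI : Finite D.L := Nat.finite_of_card_ne_zero hL0
  haveI : Fintype D.L := Fintype.ofFinite D.L
  have hfc : Fintype.card D.L = p ^ (e * (n * k)) := by rw [← Nat.card_eq_fintype_card, hcard']
  haveI : CharP D.L p :=
    charP_of_card D.L p (e * (n * k)) hp (Nat.mul_ne_zero he.ne' (Nat.mul_ne_zero hn hk)) hfc
  set K1 : Subfield D.L := frobSubfield D.L p (e * n) with hK1def
  have hcardpow : Fintype.card D.L = (p ^ (e * n)) ^ k := by
    rw [hfc, ← pow_mul]
    congr 1
    ring
  have hdvd2 : p ^ (e * n) - 1 ∣ Fintype.card D.L - 1 := by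
    rw [hcardpow]
    simpa using Nat.sub_dvd_pow_sub_pow (p ^ (e * n)) 1 k
  have hcardK1 : Nat.card K1 = (p ^ e) ^ n := by
    rw [card_frobSubfield D.L p (e * n) (mul_ne_zero he.ne' hn) hdvd2]
    exact pow_mul p e n
  have hKsub : ∀ x ∈ D.K, x ∈ K1 := by
    intro x hx
    have h1 : x ^ (p ^ e) = x := D.K.pow_card_eq (pow_ne_zero e hp.pos.ne') D.cardK hx
    have h2 := pow_pow_self h1 n
    rw [mem_frobSubfield, pow_mul]
    exact h2
  haveI : Finite K1 := Subtype.finite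
  haveI : Fintype K1 := Fintype.ofFinite K1
  haveI : DecidableEq ↥K1 := Classical.decEq _
  set coe2 : (↥K1)ˣ → D.L := fun lam => ((lam : ↥K1) : D.L) with hcoe2
  have hcoe_mul : ∀ a b : (↥K1)ˣ, coe2 (a * b) = coe2 a * coe2 b := fun a b => rfl
  have hinv1 : ∀ a : (↥K1)ˣ, coe2 a⁻¹ * coe2 a = 1 := by
    intro a
    rw [← hcoe_mul, inv_mul_cancel]
    rfl
  have hinv2 : ∀ a : (↥K1)ˣ, coe2 a * coe2 a⁻¹ = 1 := by
    intro a
    rw [← hcoe_mul, mul_inv_cancel]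
    rfl
  set Xf : Fin r → D.L → D.L := fun i z => ((D.x i z : D.K) : D.L) with hXf
  set Y : Fin r → D.L → D.L := fun i a => ∑ lam : (↥K1)ˣ, coe2 lam⁻¹ * Xf i (coe2 lam * a)
    with hY
  have hYmem : ∀ i a, Y i a ∈ K1 := by
    intro i a
    refine Subfield.sum_mem K1 fun lam _ => ?_
    exact K1.mul_mem (((lam⁻¹ : (↥K1)ˣ) : ↥K1)).2 (hKsub _ (D.x i (coe2 lam * a)).2)
  have hYadd : ∀ i a b, Y i (a + b) = Y i a + Y i b := by
    intro i a b
    simp only [hY]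
    rw [← Finset.sum_add_distrib]
    refine Finset.sum_congr rfl fun lam _ => ?_
    rw [show coe2 lam * (a + b) = coe2 lam * a + coe2 lam * b by ring]
    rw [show Xf i (coe2 lam * a + coe2 lam * b) = Xf i (coe2 lam * a) + Xf i (coe2 lam * b) by
      simp only [hXf]; rw [map_add (D.x i)]; push_cast; rfl]
    ring
  have hYsmul : ∀ i (s : ↥K1) (a : D.L), Y i ((s : D.L) * a) = (s : D.L) * Y i a := by
    intro i s a
    by_cases hs : s = 0
    · subst hs
      push_cast
      simp only [hY, hXf, zero_mul, mul_zero, map_zero, ZeroMemClass.coe_zero,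
        Finset.sum_const_zero]
    · set σ : (↥K1)ˣ := Units.mk0 s hs with hσ
      have hσc : coe2 σ = (s : D.L) := rfl
      simp only [hY]
      rw [Finset.mul_sum]
      refine Fintype.sum_equiv (Equiv.mulRight σ) _ _ ?_
      intro lam
      show coe2 lam⁻¹ * Xf i (coe2 lam * ((s : D.L) * a))
        = (s : D.L) * (coe2 (lam * σ)⁻¹ * Xf i (coe2 (lam * σ) * a))
      have h5 : coe2 (lam * σ) * a = coe2 lam * ((s : D.L) * a) := by
        rw [hcoe_mul, hσc]; ring
      have h6 : coe2 (lam * σ)⁻¹ = coe2 σ⁻¹ * coe2 lam⁻¹ := by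
        rw [mul_inv_rev, hcoe_mul]
      calc coe2 lam⁻¹ * Xf i (coe2 lam * ((s : D.L) * a))
          = (coe2 σ * coe2 σ⁻¹) * (coe2 lam⁻¹ * Xf i (coe2 lam * ((s : D.L) * a))) := by
            rw [hinv2]; ring
        _ = (s : D.L) * (coe2 (lam * σ)⁻¹ * Xf i (coe2 (lam * σ) * a)) := by
            rw [h5, h6, ← hσc]; ring
  -- the multiplicative identity
  have hcount : ((Fintype.card (↥K1)ˣ : ℕ) : D.L) = -1 := by
    have hu : Fintype.card (↥K1)ˣ = Fintype.card ↥K1 - 1 := Fintype.card_units (α := ↥K1)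
    have hK1c : Fintype.card ↥K1 = (p ^ e) ^ n := by rw [← Nat.card_eq_fintype_card, hcardK1]
    have hzero : (((p ^ e) ^ n : ℕ) : D.L) = 0 := by
      rw [(CharP.cast_eq_zero_iff D.L p _)]
      rw [← pow_mul]
      exact dvd_pow_self p (Nat.mul_ne_zero he.ne' hn)
    have hone : 1 ≤ (p ^ e) ^ n := Nat.one_le_pow _ _ (pow_pos hp.pos e)
    rw [hu, hK1c, Nat.cast_sub hone, hzero, Nat.cast_one]
    ring
  have key : ∀ a b : D.L, a * b = ∑ i, (Y i a) * (Y i b) * D.c i := by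
    intro a b
    have hinner : ∀ lam nu : (↥K1)ˣ,
        (∑ i, (coe2 lam⁻¹ * Xf i (coe2 lam * a)) * (coe2 nu⁻¹ * Xf i (coe2 nu * b)) * D.c i)
          = a * b := by
      intro lam nu
      calc (∑ i, (coe2 lam⁻¹ * Xf i (coe2 lam * a)) * (coe2 nu⁻¹ * Xf i (coe2 nu * b)) * D.c i)
          = (coe2 lam⁻¹ * coe2 nu⁻¹) *
              ∑ i, Xf i (coe2 lam * a) * Xf i (coe2 nu * b) * D.c i := by
            rw [Finset.mul_sum]
            exact Finset.sum_congr rfl fun i _ => by ring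
        _ = (coe2 lam⁻¹ * coe2 nu⁻¹) * ((coe2 lam * a) * (coe2 nu * b)) := by
            rw [← D.mul_eq (coe2 lam * a) (coe2 nu * b)]
        _ = (coe2 lam⁻¹ * coe2 lam) * ((coe2 nu⁻¹ * coe2 nu) * (a * b)) := by ring
        _ = a * b := by rw [hinv1, hinv1]; ring
    calc a * b = ((Fintype.card (↥K1)ˣ : ℕ) : D.L) * (((Fintype.card (↥K1)ˣ : ℕ) : D.L) * (a * b)) := by
          rw [hcount]; ring
      _ = ∑ lam : (↥K1)ˣ, ((Fintype.card (↥K1)ˣ : ℕ) : D.L) * (a * b) := by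
          rw [Finset.sum_const, Finset.card_univ, nsmul_eq_mul]
      _ = ∑ lam : (↥K1)ˣ, ∑ nu : (↥K1)ˣ, (a * b) := by
          refine Finset.sum_congr rfl fun lam _ => ?_
          rw [Finset.sum_const, Finset.card_univ, nsmul_eq_mul]
      _ = ∑ lam : (↥K1)ˣ, ∑ nu : (↥K1)ˣ,
            ∑ i, (coe2 lam⁻¹ * Xf i (coe2 lam * a)) * (coe2 nu⁻¹ * Xf i (coe2 nu * b)) * D.c i := by
          refine Finset.sum_congr rfl fun lam _ => Finset.sum_congr rfl fun nu _ => ?_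
          rw [hinner lam nu]
      _ = ∑ lam : (↥K1)ˣ, ∑ i, ∑ nu : (↥K1)ˣ,
            (coe2 lam⁻¹ * Xf i (coe2 lam * a)) * (coe2 nu⁻¹ * Xf i (coe2 nu * b)) * D.c i :=
          Finset.sum_congr rfl fun lam _ => Finset.sum_comm
      _ = ∑ i, ∑ lam : (↥K1)ˣ, ∑ nu : (↥K1)ˣ,
            (coe2 lam⁻¹ * Xf i (coe2 lam * a)) * (coe2 nu⁻¹ * Xf i (coe2 nu * b)) * D.c i :=
          Finset.sum_comm
      _ = ∑ i, (Y i a) * (Y i b) * D.c i := by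
          refine Finset.sum_congr rfl fun i _ => ?_
          simp only [hY]
          rw [Finset.sum_mul_sum, Finset.sum_mul]
          refine Finset.sum_congr rfl fun lam _ => ?_
          rw [Finset.sum_mul]
  refine Nonempty.intro
    { L := D.L, K := K1,
      cardL := by rw [D.cardL]; exact pow_mul _ n k,
      cardK := hcardK1,
      x := fun i =>
        { toFun := fun a => ⟨Y i a, hYmem i a⟩,
          map_add' := fun a b => Subtype.ext (hYadd i a b),
          map_smul' := fun s a => Subtype.ext (hYsmul i s a) },
      c := D.c,
      mul_eq := ?_ }
  intro a b
  exact key a b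

end Extend

theorem MSym_le (q n : ℕ) (hq : IsPrimePow q) (hn : 0 < n) :
    MSym q ≤ MSym (q ^ n) * (muSym q n : ℝ) := by
  classical
  have hq2 : 2 ≤ q := hq.two_le
  have hqn : IsPrimePow (q ^ n) := hq.pow hn.ne'
  have key1 : ∀ k : ℕ, k ≠ 0 → muSym q k ≤ muSym q n * muSym (q ^ n) k := by
    intro k hk
    have hA : {r | Nonempty (SymMulDecomp q n r)}.Nonempty := by
      obtain ⟨r, hr⟩ := exists_decomp q n hq hn.ne'
      exact ⟨r, hr⟩
    have hB : {r | Nonempty (SymMulDecomp (q ^ n) k r)}.Nonempty := by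
      obtain ⟨r, hr⟩ := exists_decomp (q ^ n) k hqn hk
      exact ⟨r, hr⟩
    have hD1 : Nonempty (SymMulDecomp q n (muSym q n)) := Nat.sInf_mem hA
    have hD2 : Nonempty (SymMulDecomp (q ^ n) k (muSym (q ^ n) k)) := Nat.sInf_mem hB
    obtain ⟨D1⟩ := hD1
    obtain ⟨D2⟩ := hD2
    obtain ⟨D3⟩ := decomp_comp hq2 hn.ne' hk D1 D2
    have D3' : SymMulDecomp q (k * n) (muSym q n * muSym (q ^ n) k) := mul_comm n k ▸ D3
    obtain ⟨D4⟩ := decomp_restrict hq hk hn.ne' D3'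
    exact Nat.sInf_le ⟨D4⟩
  have key2 : ∀ k : ℕ, k ≠ 0 → muSym (q ^ n) k ≤ muSym q (n * k) := by
    intro k hk
    have hC : {r | Nonempty (SymMulDecomp q (n * k) r)}.Nonempty := by
      obtain ⟨r, hr⟩ := exists_decomp q (n * k) hq (Nat.mul_ne_zero hn.ne' hk)
      exact ⟨r, hr⟩
    have hD : Nonempty (SymMulDecomp q (n * k) (muSym q (n * k))) := Nat.sInf_mem hC
    obtain ⟨D⟩ := hD
    obtain ⟨D'⟩ := decomp_extend hq hn.ne' hk D
    exact Nat.sInf_le ⟨D'⟩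
  rw [MSym, MSym, Filter.limsup_eq, Filter.limsup_eq]
  set S := {a : ℝ | ∀ᶠ (k : ℕ) in Filter.atTop, (muSym q k : ℝ) / k ≤ a} with hSdef
  set T := {a : ℝ | ∀ᶠ (k : ℕ) in Filter.atTop, (muSym (q ^ n) k : ℝ) / k ≤ a} with hTdef
  have hμ0 : (0 : ℝ) ≤ (muSym q n : ℝ) := Nat.cast_nonneg _
  by_cases hT : T.Nonempty
  · -- T nonempty
    have hmem : ∀ a ∈ T, ((muSym q n : ℝ) * a) ∈ S := by
      intro a ha
      rw [hSdef]
      rw [hTdef] at ha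
      simp only [Set.mem_setOf_eq] at ha ⊢
      filter_upwards [ha, Filter.eventually_ge_atTop 1] with k hk1 hk2
      have hkpos : (0 : ℝ) < (k : ℝ) := by exact_mod_cast hk2
      have h1 : (muSym q k : ℝ) ≤ (muSym q n : ℝ) * (muSym (q ^ n) k : ℝ) := by
        exact_mod_cast key1 k (by omega)
      calc (muSym q k : ℝ) / k
          ≤ ((muSym q n : ℝ) * (muSym (q ^ n) k : ℝ)) / k := (div_le_div_iff_of_pos_right hkpos).mpr h1
        _ = (muSym q n : ℝ) * ((muSym (q ^ n) k : ℝ) / k) := by ring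
        _ ≤ (muSym q n : ℝ) * a := mul_le_mul_of_nonneg_left hk1 hμ0
    have hSbdd : BddBelow S := by
      refine ⟨0, fun a ha => ?_⟩
      rw [hSdef] at ha
      simp only [Set.mem_setOf_eq] at ha
      obtain ⟨k, hk⟩ := ha.exists
      exact le_trans (div_nonneg (Nat.cast_nonneg _) (Nat.cast_nonneg _)) hk
    rcases Nat.eq_zero_or_pos (muSym q n) with hμ | hμ
    · obtain ⟨a, ha⟩ := hT
      have h0 := csInf_le hSbdd (hmem a ha)
      rw [hμ] at h0 ⊢
      push_cast at h0 ⊢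
      rw [zero_mul] at h0
      rw [mul_zero]
      exact h0
    · have hμpos : (0 : ℝ) < (muSym q n : ℝ) := by exact_mod_cast hμ
      have hle : sInf S / (muSym q n : ℝ) ≤ sInf T := by
        refine le_csInf hT fun a ha => ?_
        rw [div_le_iff₀ hμpos]
        exact (csInf_le hSbdd (hmem a ha)).trans_eq (mul_comm _ _)
      calc sInf S = (sInf S / (muSym q n : ℝ)) * (muSym q n : ℝ) := by field_simp
        _ ≤ sInf T * (muSym q n : ℝ) := mul_le_mul_of_nonneg_right hle hμ0
  · -- T empty
    have hTempty : T = ∅ := Set.not_nonempty_iff_eq_empty.mp hT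
    have hSempty : S = ∅ := by
      rw [Set.eq_empty_iff_forall_notMem]
      intro a ha
      apply hT
      refine ⟨(n : ℝ) * a, ?_⟩
      rw [hSdef] at ha
      simp only [Set.mem_setOf_eq] at ha
      rw [hTdef]
      simp only [Set.mem_setOf_eq]
      obtain ⟨K0, hK0⟩ := Filter.eventually_atTop.mp ha
      refine Filter.eventually_atTop.mpr ⟨max K0 1, fun k hk => ?_⟩
      have hk1 : 1 ≤ k := le_trans (le_max_right _ _) hk
      have hkK0 : K0 ≤ k := le_trans (le_max_left _ _) hk
      have hknz : k ≠ 0 := by omega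
      have h2 : muSym (q ^ n) k ≤ muSym q (n * k) := key2 k hknz
      have hnk : K0 ≤ n * k := le_trans hkK0 (Nat.le_mul_of_pos_left k hn)
      have h3 : (muSym q (n * k) : ℝ) / ((n * k : ℕ) : ℝ) ≤ a := hK0 _ hnk
      have hkpos : (0 : ℝ) < (k : ℝ) := by exact_mod_cast hk1
      have hnpos : (0 : ℝ) < (n : ℝ) := by exact_mod_cast hn
      calc (muSym (q ^ n) k : ℝ) / k
          ≤ (muSym q (n * k) : ℝ) / k := (div_le_div_iff_of_pos_right hkpos).mpr (by exact_mod_cast h2)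
        _ = (n : ℝ) * ((muSym q (n * k) : ℝ) / ((n * k : ℕ) : ℝ)) := by
            push_cast
            field_simp
        _ ≤ (n : ℝ) * a := mul_le_mul_of_nonneg_left h3 (le_of_lt hnpos)
    rw [hTempty, hSempty, Real.sInf_empty]
    simp
end

section
/- Assume that for every prime power Q with Q ≥ 16 one has m_{Q}^sym ≤ 2(1 + 1/(√Q − 3)) when Q is a square with √Q ≥ 4, and that μ_q^sym(2) = 3 and m_q^sym ≤ m_{q^2}^sym · μ_q^sym(2)/2 for all prime powers q. Then for every prime power q > 3, m_q^sym ≤ 3(1 + 1/(q−3)). -/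
/-- `m_q^sym = liminf_{k→∞} μ_q^sym(k)/k`. -/
noncomputable def mSym (q : ℕ) : ℝ :=
  Filter.liminf (fun k : ℕ => (muSym q k : ℝ) / k) Filter.atTop

theorem mSym_le_of_square_bound
    (h1 : ∀ Q r : ℕ, IsPrimePow Q → 16 ≤ Q → Q = r ^ 2 → 4 ≤ r →
      mSym Q ≤ 2 * (1 + 1 / ((r : ℝ) - 3)))
    (h2 : ∀ q : ℕ, IsPrimePow q → muSym q 2 = 3)
    (h3 : ∀ q : ℕ, IsPrimePow q → mSym q ≤ mSym (q ^ 2) * (muSym q 2 : ℝ) / 2) :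
    ∀ q : ℕ, IsPrimePow q → 3 < q → mSym q ≤ 3 * (1 + 1 / ((q : ℝ) - 3)) := by
  intro q hq hq3
  have hq4 : 4 ≤ q := hq3
  have hsq : IsPrimePow (q ^ 2) := hq.pow two_ne_zero
  have h16 : 16 ≤ q ^ 2 := by nlinarith
  have hQ := h1 (q ^ 2) q hsq h16 rfl hq4
  have h := h3 q hq
  rw [h2 q hq] at h
  calc mSym q ≤ mSym (q ^ 2) * (3 : ℕ) / 2 := h
    _ ≤ 2 * (1 + 1 / ((q : ℝ) - 3)) * (3 : ℕ) / 2 := by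
        push_cast
        linarith
    _ = 3 * (1 + 1 / ((q : ℝ) - 3)) := by push_cast; ring
end

section
/- For every real t ≥ 1 and every real q ≥ 15, one has 3(1 + 1/(q−3)) ≤ (4 − 1/t)(1 + 4/(q^t − 5)), i.e. the bound of Proposition 3 beats the best-possible form of bound (3) from Theorem 5 for all q ≥ 15. -/
set_option maxHeartbeats 1000000

theorem prop3_beats_bound3 (t q : ℝ) (ht : 1 ≤ t) (hq : 15 ≤ q) :
    3 * (1 + 1 / (q - 3)) ≤ (4 - 1 / t) * (1 + 4 / (q ^ t - 5)) := by
  have hq0 : (0:ℝ) < q := by linarith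
  have hq1 : (1:ℝ) ≤ q := by linarith
  have ht0 : (0:ℝ) < t := by linarith
  have hq3 : (12:ℝ) ≤ q - 3 := by linarith
  have hP : q ≤ q ^ t := by
    calc q = q ^ (1:ℝ) := (Real.rpow_one q).symm
    _ ≤ q ^ t := Real.rpow_le_rpow_of_exponent_le hq1 ht
  have hP5 : (10:ℝ) ≤ q ^ t - 5 := by linarith
  have hfr : 1 / (q - 3) ≤ 1 / 12 := by
    apply one_div_le_one_div_of_le <;> linarith
  rcases le_or_gt (4/3 : ℝ) t with hcase | hcase
  · -- t ≥ 4/3 : RHS ≥ 13/4 ≥ LHS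
    have h1 : 1 / t ≤ 3 / 4 := by
      rw [div_le_div_iff₀ ht0 (by norm_num)]; linarith
    have h2 : (0:ℝ) < 4 / (q ^ t - 5) := by positivity
    nlinarith
  · -- 1 ≤ t < 4/3
    have key : 1 / (q - 3) ≤ (t - 1) / 4 + 4 / (q ^ t - 5) := by
      rcases le_or_gt (4 / (q - 3)) (t - 1) with hc | hc
      · have h1 : 1 / (q - 3) ≤ (t - 1) / 4 := by
          rw [div_le_div_iff₀ (by linarith) (by norm_num)]
          have := (div_le_iff₀ (show (0:ℝ) < q - 3 by linarith)).mp hc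
          linarith
        have h2 : (0:ℝ) < 4 / (q ^ t - 5) := by positivity
        linarith
      · -- t - 1 < 4/(q-3) : show q^t ≤ 4q - 7
        have hlog15 : Real.log 15 ≤ 2 + 15 / Real.exp 3 := by
          have h := Real.log_le_sub_one_of_pos (x := 15 / Real.exp 3) (by positivity)
          rw [Real.log_div (by norm_num) (Real.exp_ne_zero 3), Real.log_exp] at h
          linarith
        have hexp3 : (20085:ℝ) / 1000 ≤ Real.exp 3 := by
          have h1 : Real.exp 3 = Real.exp 1 * Real.exp 1 * Real.exp 1 := by
            rw [← Real.exp_add, ← Real.exp_add]; norm_num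
          nlinarith [Real.exp_one_gt_d9, Real.exp_pos 1]
        have hlog15' : Real.log 15 ≤ 2747 / 1000 := by
          have h1 : 15 / Real.exp 3 ≤ 15 / (20085 / 1000) := by
            apply div_le_div_of_nonneg_left (by norm_num) (by norm_num) hexp3
          calc Real.log 15 ≤ 2 + 15 / Real.exp 3 := hlog15
          _ ≤ 2 + 15 / (20085/1000) := by linarith
          _ ≤ 2747 / 1000 := by norm_num
        have hlogq : Real.log q ≤ 1747 / 1000 + q / 15 := by
          have h := Real.log_le_sub_one_of_pos (x := q / 15) (by positivity)
          rw [Real.log_div (by linarith) (by norm_num)] at h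
          linarith
        have hlogq0 : 0 ≤ Real.log q := Real.log_nonneg hq1
        set y : ℝ := (t - 1) * Real.log q with hy
        have hy0 : 0 ≤ y := mul_nonneg (by linarith) hlogq0
        have hyY : y ≤ 4 / (q - 3) * (1747 / 1000 + q / 15) := by
          apply mul_le_mul (le_of_lt hc) hlogq hlogq0
          positivity
        have hY3 : 4 / (q - 3) * (1747 / 1000 + q / 15) < 2.9 := by
          rw [div_mul_eq_mul_div, div_lt_iff₀ (show (0:ℝ) < q - 3 by linarith)]
          nlinarith
        have hu0 : (0:ℝ) < 1 - y / 3 := by linarith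
        have hexpy : Real.exp y ≤ 1 / (1 - y / 3) ^ 3 := by
          have h1 : 1 - y / 3 ≤ Real.exp (-(y / 3)) := by
            have := Real.add_one_le_exp (-(y / 3)); linarith
          have h2 : Real.exp (y / 3) ≤ 1 / (1 - y / 3) := by
            rw [le_div_iff₀ hu0]
            calc Real.exp (y/3) * (1 - y/3) ≤ Real.exp (y/3) * Real.exp (-(y/3)) := by
                  apply mul_le_mul_of_nonneg_left h1 (le_of_lt (Real.exp_pos _))
            _ = 1 := by rw [← Real.exp_add]; simp
          have h3 : Real.exp y = Real.exp (y/3) ^ 3 := by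
            rw [← Real.exp_nat_mul]; norm_num; ring
          rw [h3]
          calc Real.exp (y/3) ^ 3 ≤ (1 / (1 - y/3)) ^ 3 :=
                pow_le_pow_left₀ (le_of_lt (Real.exp_pos _)) h2 3
          _ = 1 / (1 - y/3) ^ 3 := by rw [div_pow, one_pow]
        have hqt : q ^ t = q * Real.exp y := by
          rw [Real.rpow_def_of_pos hq0, hy,
            show Real.log q * t = Real.log q + (t - 1) * Real.log q by ring,
            Real.exp_add, Real.exp_log hq0]
        -- q^t ≤ 4q - 7
        have hub : 1 - 4 / (q - 3) * (1747/1000 + q/15) / 3 ≤ 1 - y / 3 := by linarith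
        have hubar : (2050 * q - 11991) / (2250 * (q - 3)) =
            1 - 4 / (q - 3) * (1747/1000 + q/15) / 3 := by
          field_simp
          ring
        have hubar0 : (0:ℝ) < (2050 * q - 11991) / (2250 * (q - 3)) := by
          apply div_pos <;> linarith
        have hpoly : q * (2250 * (q - 3)) ^ 3 ≤ (4 * q - 7) * (2050 * q - 11991) ^ 3 := by
          nlinarith [pow_nonneg (show (0:ℝ) ≤ q - 15 by linarith) 2,
            pow_nonneg (show (0:ℝ) ≤ q - 15 by linarith) 3,
            pow_nonneg (show (0:ℝ) ≤ q - 15 by linarith) 4,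
            sq_nonneg (q - 15)]
        have hqt4 : q ^ t ≤ 4 * q - 7 := by
          rw [hqt]
          have h1 : Real.exp y ≤ 1 / ((2050 * q - 11991) / (2250 * (q - 3))) ^ 3 := by
            calc Real.exp y ≤ 1 / (1 - y/3) ^ 3 := hexpy
            _ ≤ 1 / ((2050 * q - 11991) / (2250 * (q - 3))) ^ 3 := by
                apply div_le_div_of_nonneg_left (by norm_num) (by positivity)
                apply pow_le_pow_left₀ (le_of_lt hubar0)
                rw [hubar]; exact hub
          have h2 : q * Real.exp y ≤ q * (1 / ((2050 * q - 11991) / (2250 * (q - 3))) ^ 3) :=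
            mul_le_mul_of_nonneg_left h1 (le_of_lt hq0)
          have h3 : q * (1 / ((2050 * q - 11991) / (2250 * (q - 3))) ^ 3) ≤ 4 * q - 7 := by
            rw [div_pow, one_div_div, ← mul_div_assoc, div_le_iff₀ (pow_pos (by linarith) 3)]
            calc q * (2250 * (q - 3)) ^ 3 ≤ (4 * q - 7) * (2050 * q - 11991) ^ 3 := hpoly
            _ = (4 * q - 7) * ((2050 * q - 11991) ^ 3) := by ring
          linarith
        have h4 : 1 / (q - 3) ≤ 4 / (q ^ t - 5) := by
          rw [div_le_div_iff₀ (by linarith) (by linarith)]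
          linarith
        have h5 : (0:ℝ) ≤ (t - 1) / 4 := by linarith
        linarith
    -- combine: RHS ≥ (3 + 3(t-1)/4)(1 + 4/(q^t-5)) ≥ 3 + 3/(q-3) ≥ LHS
    have hE : (0:ℝ) < 4 / (q ^ t - 5) := by positivity
    have hfrac : 3 + 3 * (t - 1) / 4 ≤ 4 - 1 / t := by
      have h1 : 4 - 1 / t = 3 + (t - 1) / t := by field_simp; ring
      rw [h1]
      have h2 : 3 * (t - 1) / 4 ≤ (t - 1) / t := by
        rw [div_le_div_iff₀ (by norm_num) ht0]
        nlinarith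
      linarith
    have haE : (0:ℝ) ≤ (3 * (t - 1) / 4) * (4 / (q ^ t - 5)) :=
      mul_nonneg (by linarith) (le_of_lt hE)
    have hexpand : (3 + 3 * (t - 1) / 4) * (1 + 4 / (q ^ t - 5)) =
        3 + 3 * (4 / (q ^ t - 5)) + 3 * (t - 1) / 4 + (3 * (t - 1) / 4) * (4 / (q ^ t - 5)) := by
      ring
    have hmul : (3 + 3 * (t - 1) / 4) * (1 + 4 / (q ^ t - 5)) ≤
        (4 - 1 / t) * (1 + 4 / (q ^ t - 5)) :=
      mul_le_mul_of_nonneg_right hfrac (by linarith)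
    have hLHS : 3 * (1 + 1 / (q - 3)) = 3 + 3 * (1 / (q - 3)) := by ring
    linarith
end
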